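/- Let W be an irreducible T-module with endpoint r and diameter d. Then Q_d·W = E*_{r+d} W and Q_{−d}·W = E*_r W; moreover Q_i·W = 0 and Q_{−i}·W = 0 for all i ≥ d+1. Consequently d = max{i : 0 ≤ i ≤ D, Q_i W ≠ 0}. -/

import Mathlib

open Matrix BigOperators

noncomputable section

variable {X : Type*} [Fintype X] [DecidableEq X]

/-- The adjacency matrix of a graph, over ℂ. -/
def adjMat (G : SimpleGraph X) [DecidableRel G.Adj] : Matrix X X ℂ :=
  Matrix.of fun y z => if G.Adj y z then 1 else 0

/-- The dual idempotent `E*_i`: diagonal 0-1 matrix projecting onto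
vertices at distance `i` from `x` (zero for `i` outside the distance range). -/
def Estar (G : SimpleGraph X) (x : X) (i : ℤ) : Matrix X X ℂ :=
  Matrix.diagonal fun y => if (G.dist x y : ℤ) = i then 1 else 0

/-- The lowering matrix `L = Σ_{i=1}^D E*_{i-1} A E*_i`. -/
def lowerM (G : SimpleGraph X) [DecidableRel G.Adj] (x : X) (D : ℕ) : Matrix X X ℂ :=
  ∑ i ∈ Finset.Icc 1 D, Estar G x ((i : ℤ) - 1) * adjMat G * Estar G x i

/-- The flat matrix `F = Σ_{i=0}^D E*_i A E*_i`. -/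
def flatM (G : SimpleGraph X) [DecidableRel G.Adj] (x : X) (D : ℕ) : Matrix X X ℂ :=
  ∑ i ∈ Finset.range (D + 1), Estar G x i * adjMat G * Estar G x i

/-- The raising matrix `R = Σ_{i=0}^{D-1} E*_{i+1} A E*_i`. -/
def raiseM (G : SimpleGraph X) [DecidableRel G.Adj] (x : X) (D : ℕ) : Matrix X X ℂ :=
  ∑ i ∈ Finset.range D, Estar G x ((i : ℤ) + 1) * adjMat G * Estar G x i

/-- The subconstituent (Terwilliger) algebra `T`, generated by `A` and the `E*_i`. -/
def Talg (G : SimpleGraph X) [DecidableRel G.Adj] (x : X) (D : ℕ) :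
    Subalgebra ℂ (Matrix X X ℂ) :=
  Algebra.adjoin ℂ (insert (adjMat G) (Estar G x '' Set.Icc (0 : ℤ) (D : ℤ)))

/-- The quantum adjacency algebra `Q`, generated by `L, F, R`. -/
def Qalg (G : SimpleGraph X) [DecidableRel G.Adj] (x : X) (D : ℕ) :
    Subalgebra ℂ (Matrix X X ℂ) :=
  Algebra.adjoin ℂ {lowerM G x D, flatM G x D, raiseM G x D}

/-- The dual adjacency algebra `M*`, the span of the `E*_i`. -/
def Mstar (G : SimpleGraph X) (x : X) (D : ℕ) : Submodule ℂ (Matrix X X ℂ) :=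
  Submodule.span ℂ (Estar G x '' Set.Icc (0 : ℤ) (D : ℤ))

/-- The graded component `T_n = Σ_i E*_{i+n} T E*_i`. -/
def Tgraded (G : SimpleGraph X) [DecidableRel G.Adj] (x : X) (D : ℕ) (n : ℤ) :
    Submodule ℂ (Matrix X X ℂ) :=
  Submodule.span ℂ
    {M | ∃ i : ℤ, ∃ S ∈ Talg G x D, M = Estar G x (i + n) * S * Estar G x i}

/-- The graded component `Q_n = Q ∩ T_n`. -/
def Qgraded (G : SimpleGraph X) [DecidableRel G.Adj] (x : X) (D : ℕ) (n : ℤ) :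
    Submodule ℂ (Matrix X X ℂ) :=
  (Subalgebra.toSubmodule (Qalg G x D)) ⊓ Tgraded G x D n

/-- `W` is an irreducible module for the algebra `A₀ ⊆ Mat_X(ℂ)` (acting on `V = ℂ^X`
by matrix-vector multiplication). -/
def IsIrredMod (A₀ : Subalgebra ℂ (Matrix X X ℂ)) (W : Submodule ℂ (X → ℂ)) : Prop :=
  (∀ S ∈ A₀, ∀ w ∈ W, S.mulVec w ∈ W) ∧ W ≠ ⊥ ∧
    ∀ W' : Submodule ℂ (X → ℂ), W' ≤ W →
      (∀ S ∈ A₀, ∀ w ∈ W', S.mulVec w ∈ W') → W' = ⊥ ∨ W' = W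

/-- The subspace `E*_i W`. -/
def Emap (G : SimpleGraph X) (x : X) (i : ℤ) (W : Submodule ℂ (X → ℂ)) :
    Submodule ℂ (X → ℂ) :=
  W.map (Estar G x i).mulVecLin

/-- The subspace `P · W` spanned by all `S w`, `S ∈ P`, `w ∈ W`. -/
def actSp (P : Submodule ℂ (Matrix X X ℂ)) (W : Submodule ℂ (X → ℂ)) :
    Submodule ℂ (X → ℂ) :=
  Submodule.span ℂ {v | ∃ S ∈ P, ∃ w ∈ W, v = S.mulVec w}

/-- The statement: `W` has endpoint `r` and diameter `d`, i.e. `E*_i W ≠ 0`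
iff `r ≤ i ≤ r + d`. -/
def HasEndpointDiam (G : SimpleGraph X) (x : X) (W : Submodule ℂ (X → ℂ))
    (r d : ℕ) : Prop :=
  ∀ i : ℤ, Emap G x i W ≠ ⊥ ↔ ((r : ℤ) ≤ i ∧ i ≤ (r : ℤ) + (d : ℤ))

/-- `σ` restricts to an isomorphism of `Q`-modules from `U` to `W`. -/
def IsQIso (G : SimpleGraph X) [DecidableRel G.Adj] (x : X) (D : ℕ)
    (U W : Submodule ℂ (X → ℂ)) (σ : (X → ℂ) →ₗ[ℂ] (X → ℂ)) : Prop :=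
  U.map σ = W ∧ (∀ u ∈ U, σ u = 0 → u = 0) ∧
    ∀ S ∈ Qalg G x D, ∀ u ∈ U, σ (S.mulVec u) = S.mulVec (σ u)

/-- `σ` restricts to an isomorphism of `T`-modules from `U` to `W`. -/
def IsTIso (G : SimpleGraph X) [DecidableRel G.Adj] (x : X) (D : ℕ)
    (U W : Submodule ℂ (X → ℂ)) (σ : (X → ℂ) →ₗ[ℂ] (X → ℂ)) : Prop :=
  U.map σ = W ∧ (∀ u ∈ U, σ u = 0 → u = 0) ∧
    ∀ S ∈ Talg G x D, ∀ u ∈ U, σ (S.mulVec u) = S.mulVec (σ u)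

/-- `σ` restricts to a quasi-isomorphism of `T`-modules from `U` to `W`,
with endpoint shift `n`. -/
def IsQuasiIso (G : SimpleGraph X) [DecidableRel G.Adj] (x : X) (D : ℕ)
    (U W : Submodule ℂ (X → ℂ)) (σ : (X → ℂ) →ₗ[ℂ] (X → ℂ)) (n : ℤ) : Prop :=
  U.map σ = W ∧ (∀ u ∈ U, σ u = 0 → u = 0) ∧
    (∀ u ∈ U, σ ((lowerM G x D).mulVec u) = (lowerM G x D).mulVec (σ u)) ∧
    (∀ u ∈ U, σ ((flatM G x D).mulVec u) = (flatM G x D).mulVec (σ u)) ∧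
    (∀ u ∈ U, σ ((raiseM G x D).mulVec u) = (raiseM G x D).mulVec (σ u)) ∧
    ∀ i : ℤ, ∀ u ∈ U, σ ((Estar G x i).mulVec u) = (Estar G x (i + n)).mulVec (σ u)

end


set_option linter.unusedSectionVars false
set_option maxHeartbeats 1000000

section aux1
variable {X : Type*} [Fintype X] [DecidableEq X]
variable (G : SimpleGraph X) [DecidableRel G.Adj] (x : X) (D : ℕ)

lemma sum_mulVec {ι : Type*} (s : Finset ι) (M : ι → Matrix X X ℂ) (v : X → ℂ) :
    (∑ i ∈ s, M i).mulVec v = ∑ i ∈ s, (M i).mulVec v := by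
  induction s using Finset.cons_induction <;> simp [Matrix.add_mulVec, *]

lemma Estar_mul_Estar (i j : ℤ) :
    Estar G x i * Estar G x j = if i = j then Estar G x i else 0 := by
  unfold Estar
  rw [Matrix.diagonal_mul_diagonal]
  split_ifs with h
  · subst h
    ext y z
    by_cases hyz : y = z
    · subst hyz
      by_cases hy : (G.dist x y : ℤ) = i <;> simp [Matrix.diagonal_apply_eq, hy]
    · simp [Matrix.diagonal_apply_ne _ hyz]
  · ext y z
    by_cases hyz : y = z
    · subst hyz
      by_cases hy : (G.dist x y : ℤ) = i <;> by_cases hz : (G.dist x y : ℤ) = j <;>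
        simp [Matrix.diagonal_apply_eq, hy, hz]
      all_goals omega
    · simp [Matrix.diagonal_apply_ne _ hyz]

lemma Estar_idem (i : ℤ) : Estar G x i * Estar G x i = Estar G x i := by
  simp [Estar_mul_Estar]

lemma Estar_zero_of {i : ℤ} (h : ∀ y, (G.dist x y : ℤ) ≠ i) : Estar G x i = 0 := by
  unfold Estar
  ext y z
  by_cases hyz : y = z
  · subst hyz; simp [Matrix.diagonal_apply_eq, h y]
  · simp [Matrix.diagonal_apply_ne _ hyz]

lemma Estar_zero_of_not_mem (hD : ∀ y, G.dist x y ≤ D) {i : ℤ}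
    (h : ¬ (0 ≤ i ∧ i ≤ (D : ℤ))) : Estar G x i = 0 := by
  apply Estar_zero_of
  intro y hy
  exact h ⟨hy ▸ Int.ofNat_nonneg _, hy ▸ Int.ofNat_le.mpr (hD y)⟩

lemma sum_Estar (hD : ∀ y, G.dist x y ≤ D) :
    ∑ i ∈ Finset.range (D + 1), Estar G x (i : ℤ) = 1 := by
  ext y z
  rw [Matrix.sum_apply]
  by_cases hyz : y = z
  · subst hyz
    simp only [Estar, Matrix.diagonal_apply_eq, Matrix.one_apply_eq]
    rw [Finset.sum_eq_single (G.dist x y)]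
    · simp
    · intro b _ hb
      simp only [ite_eq_right_iff]
      intro hc
      exact absurd (Nat.cast_injective hc) (Ne.symm hb)
    · intro h
      exact absurd (Finset.mem_range.mpr (Nat.lt_succ_of_le (hD y))) h
  · simp [Estar, Matrix.diagonal_apply_ne _ hyz, Matrix.one_apply_ne hyz]

end aux1

section aux2
variable {X : Type*} [Fintype X] [DecidableEq X]
variable (G : SimpleGraph X) [DecidableRel G.Adj] (x : X) (D : ℕ)

lemma Estar_mem_T (hD : ∀ y, G.dist x y ≤ D) (i : ℤ) : Estar G x i ∈ Talg G x D := by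
  by_cases h : 0 ≤ i ∧ i ≤ (D : ℤ)
  · exact Algebra.subset_adjoin (Set.mem_insert_of_mem _ ⟨i, ⟨h.1, h.2⟩, rfl⟩)
  · rw [Estar_zero_of_not_mem G x D hD h]
    exact zero_mem _

lemma adjMat_mem_T : adjMat G ∈ Talg G x D :=
  Algebra.subset_adjoin (Set.mem_insert _ _)

lemma lowerM_mem_T (hD : ∀ y, G.dist x y ≤ D) : lowerM G x D ∈ Talg G x D :=
  Subalgebra.sum_mem _ fun i _ => mul_mem (mul_mem (Estar_mem_T G x D hD _)
    (adjMat_mem_T G x D)) (Estar_mem_T G x D hD _)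

lemma flatM_mem_T (hD : ∀ y, G.dist x y ≤ D) : flatM G x D ∈ Talg G x D :=
  Subalgebra.sum_mem _ fun i _ => mul_mem (mul_mem (Estar_mem_T G x D hD _)
    (adjMat_mem_T G x D)) (Estar_mem_T G x D hD _)

lemma raiseM_mem_T (hD : ∀ y, G.dist x y ≤ D) : raiseM G x D ∈ Talg G x D :=
  Subalgebra.sum_mem _ fun i _ => mul_mem (mul_mem (Estar_mem_T G x D hD _)
    (adjMat_mem_T G x D)) (Estar_mem_T G x D hD _)

lemma Q_le_T (hD : ∀ y, G.dist x y ≤ D) : Qalg G x D ≤ Talg G x D := by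
  apply Algebra.adjoin_le
  intro s hs
  rcases hs with h | h | h
  · exact h ▸ lowerM_mem_T G x D hD
  · exact h ▸ flatM_mem_T G x D hD
  · exact h ▸ raiseM_mem_T G x D hD

lemma lowerM_mem_Q : lowerM G x D ∈ Qalg G x D :=
  Algebra.subset_adjoin (Or.inl rfl)

lemma flatM_mem_Q : flatM G x D ∈ Qalg G x D :=
  Algebra.subset_adjoin (Or.inr (Or.inl rfl))

lemma raiseM_mem_Q : raiseM G x D ∈ Qalg G x D :=
  Algebra.subset_adjoin (Or.inr (Or.inr rfl))

/-- Adjacency decomposition: `A = L + F + R`. -/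
lemma adjMat_eq_LFR (hG : G.Connected) (hD : ∀ y, G.dist x y ≤ D) :
    adjMat G = lowerM G x D + flatM G x D + raiseM G x D := by
  ext y z
  by_cases hadj : G.Adj y z
  · have hA : adjMat G y z = 1 := by simp [adjMat, hadj]
    have h1 : G.dist x z ≤ G.dist x y + 1 := by
      have := hG.dist_triangle (u := x) (v := y) (w := z)
      rwa [SimpleGraph.dist_eq_one_iff_adj.mpr hadj] at this
    have h2 : G.dist x y ≤ G.dist x z + 1 := by
      have := hG.dist_triangle (u := x) (v := z) (w := y)
      rwa [SimpleGraph.dist_eq_one_iff_adj.mpr hadj.symm] at this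
    set a := G.dist x y with ha
    set b := G.dist x z with hb
    have hbD : b ≤ D := hD z
    have haD : a ≤ D := hD y
    have hterm : ∀ (p q : ℤ), (Estar G x p * adjMat G * Estar G x q) y z =
        (if (a : ℤ) = p then 1 else 0) * (if (b : ℤ) = q then 1 else 0) := by
      intro p q
      rw [Matrix.mul_apply]
      rw [Finset.sum_eq_single z]
      · simp only [Estar, Matrix.mul_diagonal, Matrix.diagonal_mul, Matrix.diagonal_apply_eq]
        rw [hA]; ring
      · intro c _ hc
        simp [Estar, Matrix.mul_diagonal, Matrix.diagonal_apply_ne _ hc]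
      · simp
    -- evaluate the three sums
    have evalsum : ∀ (s : Finset ℕ) (f : ℕ → ℤ),
        (∑ i ∈ s, Estar G x (f i) * adjMat G * Estar G x (i : ℤ)) y z =
        if b ∈ s ∧ (a : ℤ) = f b then 1 else 0 := by
      intro s f
      rw [Matrix.sum_apply]
      by_cases hbs : b ∈ s
      · rw [Finset.sum_eq_single b]
        · rw [hterm]
          by_cases hfa : (a : ℤ) = f b <;> simp [hfa, hbs]
        · intro c _ hc
          rw [hterm]
          have : ¬ ((b : ℤ) = (c : ℤ)) := by exact_mod_cast Ne.symm hc
          simp [this]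
        · intro h; exact absurd hbs h
      · simp only [hbs, false_and, if_false]
        apply Finset.sum_eq_zero
        intro c hcs
        rw [hterm]
        have : ¬ ((b : ℤ) = (c : ℤ)) := by
          intro h
          exact hbs ((Nat.cast_injective h) ▸ hcs)
        simp [this]
    rw [Matrix.add_apply, Matrix.add_apply]
    unfold lowerM flatM raiseM
    rw [evalsum (Finset.Icc 1 D) (fun i => (i : ℤ) - 1),
        evalsum (Finset.range (D + 1)) (fun i => (i : ℤ)),
        evalsum (Finset.range D) (fun i => (i : ℤ) + 1)]
    rw [hA]
    simp only [Finset.mem_Icc, Finset.mem_range]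
    -- case analysis on a vs b
    rcases lt_trichotomy a b with hab | hab | hab
    · have hba : b = a + 1 := by omega
      have : (1 ≤ b ∧ b ≤ D) ∧ (a : ℤ) = (b : ℤ) - 1 := by
        constructor
        · omega
        · omega
      rw [if_pos this]
      have h2' : ¬ (b < D + 1 ∧ (a:ℤ) = (b:ℤ)) := by omega
      have h3' : ¬ (b < D ∧ (a:ℤ) = (b:ℤ) + 1) := by omega
      rw [if_neg h2', if_neg h3']; ring
    · have h1' : ¬ ((1 ≤ b ∧ b ≤ D) ∧ (a : ℤ) = (b : ℤ) - 1) := by omega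
      have h2' : (b < D + 1 ∧ (a:ℤ) = (b:ℤ)) := by omega
      have h3' : ¬ (b < D ∧ (a:ℤ) = (b:ℤ) + 1) := by omega
      rw [if_neg h1', if_pos h2', if_neg h3']; ring
    · have h1' : ¬ ((1 ≤ b ∧ b ≤ D) ∧ (a : ℤ) = (b : ℤ) - 1) := by omega
      have h2' : ¬ (b < D + 1 ∧ (a:ℤ) = (b:ℤ)) := by omega
      have h3' : (b < D ∧ (a:ℤ) = (b:ℤ) + 1) := by omega
      rw [if_neg h1', if_neg h2', if_pos h3']; ring
  · have hA : adjMat G y z = 0 := by simp [adjMat, hadj]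
    rw [hA, Matrix.add_apply, Matrix.add_apply]
    have hterm0 : ∀ (p q : ℤ), (Estar G x p * adjMat G * Estar G x q) y z = 0 := by
      intro p q
      rw [Matrix.mul_apply]
      apply Finset.sum_eq_zero
      intro c _
      by_cases hc : c = z
      · subst hc
        simp only [Estar, Matrix.mul_diagonal, Matrix.diagonal_mul]
        rw [hA]; ring
      · simp [Estar, Matrix.mul_diagonal, Matrix.diagonal_apply_ne _ hc]
    unfold lowerM flatM raiseM
    rw [Matrix.sum_apply, Matrix.sum_apply, Matrix.sum_apply]
    simp [hterm0]

end aux2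

section aux3
variable {X : Type*} [Fintype X] [DecidableEq X]
variable (G : SimpleGraph X) [DecidableRel G.Adj] (x : X) (D : ℕ)

lemma mem_Tgraded_single (n i : ℤ) {S : Matrix X X ℂ} (hS : S ∈ Talg G x D) :
    Estar G x (i + n) * S * Estar G x i ∈ Tgraded G x D n :=
  Submodule.subset_span ⟨i, S, hS, rfl⟩

lemma lowerM_mem_Tgraded : lowerM G x D ∈ Tgraded G x D (-1) := by
  apply Submodule.sum_mem
  intro i _
  have : ((i : ℤ) - 1) = (i : ℤ) + (-1) := by ring
  rw [this]
  exact mem_Tgraded_single G x D (-1) i (adjMat_mem_T G x D)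

lemma flatM_mem_Tgraded : flatM G x D ∈ Tgraded G x D 0 := by
  apply Submodule.sum_mem
  intro i _
  have : (i : ℤ) = (i : ℤ) + 0 := by ring
  nth_rewrite 1 [this]
  exact mem_Tgraded_single G x D 0 i (adjMat_mem_T G x D)

lemma raiseM_mem_Tgraded : raiseM G x D ∈ Tgraded G x D 1 := by
  apply Submodule.sum_mem
  intro i _
  exact mem_Tgraded_single G x D 1 i (adjMat_mem_T G x D)

lemma one_mem_Tgraded (hD : ∀ y, G.dist x y ≤ D) : (1 : Matrix X X ℂ) ∈ Tgraded G x D 0 := by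
  rw [← sum_Estar G x D hD]
  apply Submodule.sum_mem
  intro i _
  have : Estar G x (i : ℤ) = Estar G x ((i : ℤ) + 0) * 1 * Estar G x (i : ℤ) := by
    rw [add_zero, mul_one, Estar_idem]
  rw [this]
  exact mem_Tgraded_single G x D 0 i (one_mem _)

lemma Tgraded_mul (hD : ∀ y, G.dist x y ≤ D) {m n : ℤ} {a b : Matrix X X ℂ}
    (ha : a ∈ Tgraded G x D m) (hb : b ∈ Tgraded G x D n) :
    a * b ∈ Tgraded G x D (m + n) := by
  induction ha using Submodule.span_induction with
  | mem a hmem =>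
    obtain ⟨i, S, hS, rfl⟩ := hmem
    induction hb using Submodule.span_induction with
    | mem b hmem' =>
      obtain ⟨j, S', hS', rfl⟩ := hmem'
      have key : (Estar G x (i + m) * S * Estar G x i) * (Estar G x (j + n) * S' * Estar G x j)
          = Estar G x (i + m) * ((S * (Estar G x i * Estar G x (j + n)) * S') * Estar G x j) := by
        simp only [mul_assoc]
      rw [key, Estar_mul_Estar]
      by_cases hij : i = j + n
      · rw [if_pos hij]
        subst hij
        rw [show (j + n) + m = j + (m + n) by ring, ← mul_assoc]
        exact mem_Tgraded_single G x D (m + n) j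
          (mul_mem (mul_mem hS (Estar_mem_T G x D hD _)) hS')
      · rw [if_neg hij]
        simp only [mul_zero, zero_mul]
        exact zero_mem _
    | zero => rw [mul_zero]; exact zero_mem _
    | add b c _ _ hb hc => rw [mul_add]; exact add_mem hb hc
    | smul c b _ hb => rw [mul_smul_comm]; exact Submodule.smul_mem _ _ hb
  | zero => rw [zero_mul]; exact zero_mem _
  | add a c _ _ ha hc => rw [add_mul]; exact add_mem ha hc
  | smul c a _ ha => rw [smul_mul_assoc]; exact Submodule.smul_mem _ _ ha

end aux3

section aux4
variable {X : Type*} [Fintype X] [DecidableEq X]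
variable (G : SimpleGraph X) [DecidableRel G.Adj] (x : X) (D : ℕ)

/-- Block lemma: a homogeneous element of degree `n` has zero `(j,i)`-block unless `j = i + n`. -/
lemma Tgraded_block {n : ℤ} {s : Matrix X X ℂ} (hs : s ∈ Tgraded G x D n)
    {i j : ℤ} (h : j ≠ i + n) : Estar G x j * s * Estar G x i = 0 := by
  induction hs using Submodule.span_induction with
  | mem s hmem =>
    obtain ⟨k, S, hS, rfl⟩ := hmem
    by_cases hjk : j = k + n
    · have hik : i ≠ k := fun hik => h (by rw [hik, hjk])
      have : Estar G x j * (Estar G x (k + n) * S * Estar G x k) * Estar G x i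
          = Estar G x j * Estar G x (k + n) * S * (Estar G x k * Estar G x i) := by
        simp only [mul_assoc]
      rw [this, Estar_mul_Estar G x k i, if_neg (fun hh => hik hh.symm), mul_zero]
    · have : Estar G x j * (Estar G x (k + n) * S * Estar G x k) * Estar G x i
          = (Estar G x j * Estar G x (k + n)) * S * (Estar G x k * Estar G x i) := by
        simp only [mul_assoc]
      rw [this, Estar_mul_Estar G x j (k + n), if_neg hjk]
      simp
  | zero => simp
  | add a b _ _ ha hb => rw [mul_add, add_mul, ha, hb, add_zero]
  | smul c a _ ha => rw [mul_smul_comm, smul_mul_assoc, ha, smul_zero]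

/-- Slice lemma: for homogeneous `s` of degree `n`, `s E*_i = E*_{i+n} s E*_i`. -/
lemma Tgraded_slice (hD : ∀ y, G.dist x y ≤ D) {n : ℤ} {s : Matrix X X ℂ}
    (hs : s ∈ Tgraded G x D n) (i : ℤ) :
    s * Estar G x i = Estar G x (i + n) * (s * Estar G x i) := by
  have h1 : s * Estar G x i = ∑ j ∈ Finset.range (D + 1),
      Estar G x (j : ℤ) * s * Estar G x i := by
    calc s * Estar G x i = 1 * (s * Estar G x i) := (one_mul _).symm
    _ = (∑ j ∈ Finset.range (D + 1), Estar G x (j : ℤ)) * (s * Estar G x i) := by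
        rw [sum_Estar G x D hD]
    _ = ∑ j ∈ Finset.range (D + 1), Estar G x (j : ℤ) * s * Estar G x i := by
        rw [Finset.sum_mul]; simp only [mul_assoc]
  by_cases hin : 0 ≤ i + n ∧ i + n ≤ (D : ℤ)
  · have h2 : ∑ j ∈ Finset.range (D + 1), Estar G x (j : ℤ) * s * Estar G x i
        = Estar G x (((i + n).toNat : ℕ) : ℤ) * s * Estar G x i := by
      apply Finset.sum_eq_single
      · intro b _ hb
        apply Tgraded_block G x D hs
        intro hc
        exact hb (by omega)
      · intro hmem
        exfalso
        apply hmem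
        rw [Finset.mem_range]
        omega
    have h3 : ((i + n).toNat : ℤ) = i + n := Int.toNat_of_nonneg hin.1
    conv_lhs => rw [h1]
    rw [h2, h3, mul_assoc]
  · have h0 : Estar G x (i + n) = 0 := Estar_zero_of_not_mem G x D hD hin
    rw [h0, zero_mul]
    rw [h1]
    apply Finset.sum_eq_zero
    intro b hb
    have hb' : b < D + 1 := Finset.mem_range.mp hb
    rcases not_and_or.mp hin with h | h
    · apply Tgraded_block G x D hs; omega
    · apply Tgraded_block G x D hs; omega

lemma one_mem_Qgraded (hD : ∀ y, G.dist x y ≤ D) :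
    (1 : Matrix X X ℂ) ∈ Qgraded G x D 0 :=
  ⟨one_mem (Qalg G x D), one_mem_Tgraded G x D hD⟩

lemma Qgraded_le_Q (n : ℤ) {s : Matrix X X ℂ} (hs : s ∈ Qgraded G x D n) :
    s ∈ Qalg G x D := hs.1

/-- The quantum algebra decomposes into its graded pieces. -/
lemma Q_le_iSup_Qgraded (hD : ∀ y, G.dist x y ≤ D) {a : Matrix X X ℂ}
    (ha : a ∈ Qalg G x D) : a ∈ ⨆ n : ℤ, Qgraded G x D n := by
  induction ha using Algebra.adjoin_induction with
  | mem s hs =>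
    rcases hs with h | h | h
    · subst h
      exact Submodule.mem_iSup_of_mem (-1) ⟨lowerM_mem_Q G x D, lowerM_mem_Tgraded G x D⟩
    · subst h
      exact Submodule.mem_iSup_of_mem 0 ⟨flatM_mem_Q G x D, flatM_mem_Tgraded G x D⟩
    · subst h
      exact Submodule.mem_iSup_of_mem 1 ⟨raiseM_mem_Q G x D, raiseM_mem_Tgraded G x D⟩
  | algebraMap c =>
    rw [Algebra.algebraMap_eq_smul_one]
    exact Submodule.smul_mem _ _ (Submodule.mem_iSup_of_mem 0 (one_mem_Qgraded G x D hD))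
  | add a b _ _ ha hb => exact add_mem ha hb
  | mul a b _ _ ha hb =>
    refine Submodule.iSup_induction (motive := fun a => a * b ∈ ⨆ n : ℤ, Qgraded G x D n)
      (fun n => Qgraded G x D n) ha ?_ ?_ ?_
    · intro m a' ha'
      refine Submodule.iSup_induction (motive := fun b => a' * b ∈ ⨆ n : ℤ, Qgraded G x D n)
        (fun n => Qgraded G x D n) hb ?_ ?_ ?_
      · intro n b' hb'
        exact Submodule.mem_iSup_of_mem (m + n)
          ⟨(Subalgebra.mem_toSubmodule _).mpr (mul_mem ((Subalgebra.mem_toSubmodule _).mp ha'.1)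
            ((Subalgebra.mem_toSubmodule _).mp hb'.1)), Tgraded_mul G x D hD ha'.2 hb'.2⟩
      · show a' * 0 ∈ _
        rw [mul_zero]; exact zero_mem _
      · intro u v hu hv
        show a' * (u + v) ∈ _
        rw [mul_add]; exact add_mem hu hv
    · show (0 : Matrix X X ℂ) * b ∈ _
      rw [zero_mul]; exact zero_mem _
    · intro u v hu hv
      show (u + v) * b ∈ _
      rw [add_mul]; exact add_mem hu hv

end aux4

section aux5
variable {X : Type*} [Fintype X] [DecidableEq X]
variable (G : SimpleGraph X) [DecidableRel G.Adj] (x : X) (D : ℕ)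
variable (W : Submodule ℂ (X → ℂ)) (r d : ℕ)

lemma mem_Emap {i : ℤ} {w : X → ℂ} (hw : w ∈ W) :
    (Estar G x i).mulVec w ∈ Emap G x i W := by
  have := Submodule.mem_map_of_mem (f := (Estar G x i).mulVecLin) hw
  rwa [Matrix.mulVecLin_apply] at this

lemma Emap_le_W (hD : ∀ y, G.dist x y ≤ D) (hW : IsIrredMod (Talg G x D) W) (i : ℤ) :
    Emap G x i W ≤ W := by
  rintro v ⟨w, hw, rfl⟩
  rw [Matrix.mulVecLin_apply]
  exact hW.1 _ (Estar_mem_T G x D hD i) w hw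

lemma Estar_mulVec_zero (hrd : HasEndpointDiam G x W r d) {i : ℤ}
    (hi : ¬ ((r : ℤ) ≤ i ∧ i ≤ (r : ℤ) + (d : ℤ))) {w : X → ℂ} (hw : w ∈ W) :
    (Estar G x i).mulVec w = 0 := by
  have hbot : Emap G x i W = ⊥ := by
    by_contra h
    exact hi ((hrd i).mp h)
  have := mem_Emap G x W hw (i := i)
  rw [hbot, Submodule.mem_bot] at this
  exact this

lemma mem_actSp {P : Submodule ℂ (Matrix X X ℂ)} {S : Matrix X X ℂ} (hS : S ∈ P)
    {w : X → ℂ} (hw : w ∈ W) : S.mulVec w ∈ actSp P W :=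
  Submodule.subset_span ⟨S, hS, w, hw, rfl⟩

/-- Decomposition of the action of a homogeneous element. -/
lemma homog_mulVec (hD : ∀ y, G.dist x y ≤ D) {n : ℤ} {s : Matrix X X ℂ}
    (hs : s ∈ Tgraded G x D n) (w : X → ℂ) :
    s.mulVec w = ∑ i ∈ Finset.range (D + 1),
      (Estar G x ((i : ℤ) + n)).mulVec
        ((s * Estar G x (i : ℤ)).mulVec ((Estar G x (i : ℤ)).mulVec w)) := by
  have h1 : s.mulVec w = ∑ i ∈ Finset.range (D + 1), (s * Estar G x (i : ℤ)).mulVec w := by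
    calc s.mulVec w = (s * 1).mulVec w := by rw [mul_one]
    _ = (s * ∑ i ∈ Finset.range (D + 1), Estar G x (i : ℤ)).mulVec w := by
        rw [sum_Estar G x D hD]
    _ = (∑ i ∈ Finset.range (D + 1), s * Estar G x (i : ℤ)).mulVec w := by
        rw [Finset.mul_sum]
    _ = _ := _root_.sum_mulVec _ _ _
  rw [h1]
  apply Finset.sum_congr rfl
  intro i _
  have h2 : s * Estar G x (i : ℤ)
      = Estar G x ((i : ℤ) + n) * ((s * Estar G x (i : ℤ)) * Estar G x (i : ℤ)) := by
    conv_lhs => rw [Tgraded_slice G x D hD hs (i : ℤ)]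
    rw [mul_assoc, Estar_idem]
  conv_lhs => rw [h2]
  rw [← Matrix.mulVec_mulVec, ← Matrix.mulVec_mulVec]

/-- Each term of the decomposition lies in the corresponding `E*`-subspace. -/
lemma term_mem (hD : ∀ y, G.dist x y ≤ D) (hW : IsIrredMod (Talg G x D) W)
    {n : ℤ} {s : Matrix X X ℂ} (hs : s ∈ Qalg G x D) {w : X → ℂ} (hw : w ∈ W) (i : ℤ) :
    (Estar G x (i + n)).mulVec ((s * Estar G x i).mulVec ((Estar G x i).mulVec w))
      ∈ Emap G x (i + n) W := by
  apply mem_Emap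
  exact hW.1 _ (mul_mem (Q_le_T G x D hD hs) (Estar_mem_T G x D hD i)) _
    (hW.1 _ (Estar_mem_T G x D hD i) w hw)

/-- The general upper bound for `Q_n · W`. -/
lemma act_le_Emap (hD : ∀ y, G.dist x y ≤ D) (hW : IsIrredMod (Talg G x D) W)
    (hrd : HasEndpointDiam G x W r d) (n j : ℤ)
    (hj : ∀ i : ℤ, ((r : ℤ) ≤ i ∧ i ≤ (r : ℤ) + (d : ℤ)) →
      ((r : ℤ) ≤ i + n ∧ i + n ≤ (r : ℤ) + (d : ℤ)) → i + n = j) :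
    actSp (Qgraded G x D n) W ≤ Emap G x j W := by
  rw [actSp, Submodule.span_le]
  rintro v ⟨s, hs, w, hw, rfl⟩
  rw [SetLike.mem_coe, homog_mulVec G x D hD hs.2 w]
  apply Submodule.sum_mem
  intro i _
  by_cases hlo : ((r : ℤ) ≤ (i : ℤ) ∧ (i : ℤ) ≤ (r : ℤ) + (d : ℤ))
  · by_cases hhi : ((r : ℤ) ≤ (i : ℤ) + n ∧ (i : ℤ) + n ≤ (r : ℤ) + (d : ℤ))
    · rw [← hj (i : ℤ) hlo hhi]
      exact term_mem G x D W hD hW hs.1 hw (i : ℤ)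
    · have := term_mem G x D W hD hW hs.1 hw (n := n) (i : ℤ)
      have hbot : Emap G x ((i : ℤ) + n) W = ⊥ := by
        by_contra h
        exact hhi ((hrd _).mp h)
      rw [hbot, Submodule.mem_bot] at this
      rw [this]
      exact zero_mem _
  · rw [Estar_mulVec_zero G x W r d hrd hlo hw, Matrix.mulVec_zero, Matrix.mulVec_zero]
    exact zero_mem _

lemma act_eq_bot (hD : ∀ y, G.dist x y ≤ D) (hW : IsIrredMod (Talg G x D) W)
    (hrd : HasEndpointDiam G x W r d) {n : ℤ}
    (hn : (d : ℤ) + 1 ≤ n ∨ n ≤ -((d : ℤ) + 1)) :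
    actSp (Qgraded G x D n) W = ⊥ := by
  rw [← le_bot_iff]
  have hjbot : Emap G x ((r : ℤ) - 1) W = ⊥ := by
    by_contra h
    have := (hrd _).mp h
    omega
  rw [← hjbot]
  apply act_le_Emap G x D W r d hD hW hrd
  intro i hlo hhi
  omega

end aux5

section aux6
variable {X : Type*} [Fintype X] [DecidableEq X]
variable (G : SimpleGraph X) [DecidableRel G.Adj] (x : X) (D : ℕ)
variable (W : Submodule ℂ (X → ℂ)) (r d : ℕ)

/-- On `E*_k W`, the idempotent `E*_k` acts as the identity. -/
lemma Estar_fix {k : ℤ} {u : X → ℂ} (hu : u ∈ Emap G x k W) :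
    (Estar G x k).mulVec u = u := by
  obtain ⟨w, hw, rfl⟩ := hu
  rw [Matrix.mulVecLin_apply, Matrix.mulVec_mulVec, Estar_idem]

/-- Key slicing identity: for homogeneous `S'` of degree `n`,
`E*_j S' u = 0` if `j ≠ k + n`, and `= S' u` if `j = k + n`, for `u ∈ E*_k W`. -/
lemma Estar_mulVec_homog (hD : ∀ y, G.dist x y ≤ D) {n : ℤ} {S' : Matrix X X ℂ}
    (hS' : S' ∈ Tgraded G x D n) {k : ℤ} {u : X → ℂ} (hu : u ∈ Emap G x k W) (j : ℤ) :
    (Estar G x j).mulVec (S'.mulVec u)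
      = if j = k + n then S'.mulVec u else 0 := by
  have hfix : (Estar G x k).mulVec u = u := Estar_fix G x W hu
  have key : (Estar G x j).mulVec (S'.mulVec u)
      = (Estar G x j * (S' * Estar G x k)).mulVec u := by
    conv_lhs => rw [← hfix]
    rw [Matrix.mulVec_mulVec, Matrix.mulVec_mulVec, mul_assoc]
  split_ifs with hj
  · subst hj
    have h1 : Estar G x (k + n) * (S' * Estar G x k) = S' * Estar G x k := by
      conv_rhs => rw [Tgraded_slice G x D hD hS' k]
    rw [key, h1, ← Matrix.mulVec_mulVec, hfix]
  · have h0 : Estar G x j * (S' * Estar G x k) = 0 := by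
      rw [← mul_assoc]
      exact Tgraded_block G x D hS' hj
    rw [key, h0, Matrix.zero_mulVec]

/-- `Q · (E*_k W) = W` for any `k` with `E*_k W ≠ 0`. -/
lemma QEk_eq_W (hG : G.Connected) (hD : ∀ y, G.dist x y ≤ D)
    (hW : IsIrredMod (Talg G x D) W) (k : ℤ) (hk : Emap G x k W ≠ ⊥) :
    actSp (Subalgebra.toSubmodule (Qalg G x D)) (Emap G x k W) = W := by
  set U := actSp (Subalgebra.toSubmodule (Qalg G x D)) (Emap G x k W) with hU
  have hUW : U ≤ W := by
    rw [hU, actSp, Submodule.span_le]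
    rintro v ⟨S, hS, u, hu, rfl⟩
    exact hW.1 _ (Q_le_T G x D hD ((Subalgebra.mem_toSubmodule _).mp hS)) _
      (Emap_le_W G x D W hD hW k hu)
  have hQstab : ∀ q ∈ Qalg G x D, ∀ v ∈ U, q.mulVec v ∈ U := by
    intro q hq v hv
    induction hv using Submodule.span_induction with
    | mem v hmem =>
      obtain ⟨S, hS, u, hu, rfl⟩ := hmem
      rw [Matrix.mulVec_mulVec]
      exact Submodule.subset_span ⟨q * S,
        (Subalgebra.mem_toSubmodule _).mpr (mul_mem hq ((Subalgebra.mem_toSubmodule _).mp hS)),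
        u, hu, rfl⟩
    | zero => rw [Matrix.mulVec_zero]; exact zero_mem _
    | add a b _ _ ha hb => rw [Matrix.mulVec_add]; exact add_mem ha hb
    | smul c a _ ha => rw [Matrix.mulVec_smul]; exact Submodule.smul_mem _ _ ha
  have hEstab : ∀ j : ℤ, ∀ v ∈ U, (Estar G x j).mulVec v ∈ U := by
    intro j v hv
    induction hv using Submodule.span_induction with
    | mem v hmem =>
      obtain ⟨S, hS, u, hu, rfl⟩ := hmem
      have hSi : S ∈ ⨆ n : ℤ, Qgraded G x D n :=
        Q_le_iSup_Qgraded G x D hD ((Subalgebra.mem_toSubmodule _).mp hS)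
      refine Submodule.iSup_induction
        (motive := fun S => (Estar G x j).mulVec (S.mulVec u) ∈ U)
        (fun n => Qgraded G x D n) hSi ?_ ?_ ?_
      · intro n S' hS'
        rw [Estar_mulVec_homog G x D W hD hS'.2 hu j]
        split_ifs
        · exact Submodule.subset_span ⟨S', hS'.1, u, hu, rfl⟩
        · exact zero_mem _
      · show (Estar G x j).mulVec ((0 : Matrix X X ℂ).mulVec u) ∈ U
        rw [Matrix.zero_mulVec, Matrix.mulVec_zero]; exact zero_mem _
      · intro a b ha hb
        show (Estar G x j).mulVec ((a + b).mulVec u) ∈ U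
        rw [Matrix.add_mulVec, Matrix.mulVec_add]; exact add_mem ha hb
    | zero => rw [Matrix.mulVec_zero]; exact zero_mem _
    | add a b _ _ ha hb => rw [Matrix.mulVec_add]; exact add_mem ha hb
    | smul c a _ ha => rw [Matrix.mulVec_smul]; exact Submodule.smul_mem _ _ ha
  have hTstab : ∀ S ∈ Talg G x D, ∀ v ∈ U, S.mulVec v ∈ U := by
    intro S hS
    induction hS using Algebra.adjoin_induction with
    | mem s hsmem =>
      rcases hsmem with h | h
      · subst h
        intro v hv
        rw [adjMat_eq_LFR G x D hG hD, Matrix.add_mulVec, Matrix.add_mulVec]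
        exact add_mem (add_mem
          (hQstab _ (lowerM_mem_Q G x D) v hv)
          (hQstab _ (flatM_mem_Q G x D) v hv))
          (hQstab _ (raiseM_mem_Q G x D) v hv)
      · obtain ⟨i, _, rfl⟩ := h
        exact hEstab i
    | algebraMap c =>
      intro v hv
      rw [Algebra.algebraMap_eq_smul_one, Matrix.smul_mulVec, Matrix.one_mulVec]
      exact Submodule.smul_mem _ _ hv
    | add a b _ _ ha hb =>
      intro v hv
      rw [Matrix.add_mulVec]
      exact add_mem (ha v hv) (hb v hv)
    | mul a b _ _ ha hb =>
      intro v hv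
      rw [← Matrix.mulVec_mulVec]
      exact ha _ (hb v hv)
  have hUbot : U ≠ ⊥ := by
    obtain ⟨u, hu, hune⟩ := (Submodule.ne_bot_iff _).mp hk
    refine (Submodule.ne_bot_iff _).mpr ⟨u, ?_, hune⟩
    have : u = (1 : Matrix X X ℂ).mulVec u := (Matrix.one_mulVec u).symm
    rw [this]
    exact Submodule.subset_span ⟨1, (Subalgebra.mem_toSubmodule _).mpr (one_mem _), u, hu, rfl⟩
  rcases hW.2.2 U hUW hTstab with h | h
  · exact absurd h hUbot
  · exact h

/-- The lower bound: `E*_m W ⊆ Q_{m-k} · W` whenever `E*_k W ≠ 0`. -/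
lemma Emap_le_act (hG : G.Connected) (hD : ∀ y, G.dist x y ≤ D)
    (hW : IsIrredMod (Talg G x D) W) (k m n : ℤ) (hk : Emap G x k W ≠ ⊥)
    (hn : m = k + n) : Emap G x m W ≤ actSp (Qgraded G x D n) W := by
  rintro v ⟨w, hw, rfl⟩
  rw [Matrix.mulVecLin_apply]
  have hw' : w ∈ actSp (Subalgebra.toSubmodule (Qalg G x D)) (Emap G x k W) := by
    rw [QEk_eq_W G x D W hG hD hW k hk]
    exact hw
  clear hw
  induction hw' using Submodule.span_induction with
  | mem v hmem =>
    obtain ⟨S, hS, u, hu, rfl⟩ := hmem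
    have hSi : S ∈ ⨆ n : ℤ, Qgraded G x D n :=
      Q_le_iSup_Qgraded G x D hD ((Subalgebra.mem_toSubmodule _).mp hS)
    refine Submodule.iSup_induction
      (motive := fun S => (Estar G x m).mulVec (S.mulVec u) ∈ actSp (Qgraded G x D n) W)
      (fun n => Qgraded G x D n) hSi ?_ ?_ ?_
    · intro n' S' hS'
      rw [Estar_mulVec_homog G x D W hD hS'.2 hu m]
      split_ifs with hcase
      · have hn' : n' = n := by omega
        subst hn'
        exact mem_actSp W hS' (Emap_le_W G x D W hD hW k hu)
      · exact zero_mem _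
    · show (Estar G x m).mulVec ((0 : Matrix X X ℂ).mulVec u) ∈ _
      rw [Matrix.zero_mulVec, Matrix.mulVec_zero]; exact zero_mem _
    · intro a b ha hb
      show (Estar G x m).mulVec ((a + b).mulVec u) ∈ _
      rw [Matrix.add_mulVec, Matrix.mulVec_add]; exact add_mem ha hb
  | zero => rw [Matrix.mulVec_zero]; exact zero_mem _
  | add a b _ _ ha hb => rw [Matrix.mulVec_add]; exact add_mem ha hb
  | smul c a _ ha => rw [Matrix.mulVec_smul]; exact Submodule.smul_mem _ _ ha

end aux6

theorem stmt15 {X : Type*} [Fintype X] [DecidableEq X]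
    (G : SimpleGraph X) [DecidableRel G.Adj] (hG : G.Connected) (x : X) (D : ℕ)
    (hD : ∀ y, G.dist x y ≤ D) (hD2 : ∃ y, G.dist x y = D)
    (W : Submodule ℂ (X → ℂ)) (hW : IsIrredMod (Talg G x D) W)
    (r d : ℕ) (hrd : HasEndpointDiam G x W r d) :
    actSp (Qgraded G x D d) W = Emap G x ((r : ℤ) + (d : ℤ)) W ∧
    actSp (Qgraded G x D (-(d : ℤ))) W = Emap G x r W ∧
    (∀ i : ℤ, (d : ℤ) + 1 ≤ i →
      actSp (Qgraded G x D i) W = ⊥ ∧ actSp (Qgraded G x D (-i)) W = ⊥) ∧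
    IsGreatest {i : ℕ | i ≤ D ∧ actSp (Qgraded G x D i) W ≠ ⊥} d := by
  have hd_lo : Emap G x (r : ℤ) W ≠ ⊥ := (hrd r).mpr ⟨le_refl _, by omega⟩
  have hd_hi : Emap G x ((r : ℤ) + (d : ℤ)) W ≠ ⊥ := (hrd _).mpr ⟨by omega, le_refl _⟩
  have part1 : actSp (Qgraded G x D d) W = Emap G x ((r : ℤ) + (d : ℤ)) W := by
    apply le_antisymm
    · exact act_le_Emap G x D W r d hD hW hrd (d : ℤ) ((r : ℤ) + (d : ℤ))
        (fun i h1 h2 => by omega)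
    · exact Emap_le_act G x D W hG hD hW (r : ℤ) ((r : ℤ) + (d : ℤ)) (d : ℤ) hd_lo (by ring)
  have part2 : actSp (Qgraded G x D (-(d : ℤ))) W = Emap G x (r : ℤ) W := by
    apply le_antisymm
    · exact act_le_Emap G x D W r d hD hW hrd (-(d : ℤ)) (r : ℤ)
        (fun i h1 h2 => by omega)
    · exact Emap_le_act G x D W hG hD hW ((r : ℤ) + (d : ℤ)) (r : ℤ) (-(d : ℤ)) hd_hi (by ring)
  refine ⟨part1, part2, ?_, ?_⟩
  · intro i hi
    exact ⟨act_eq_bot G x D W r d hD hW hrd (Or.inl hi),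
      act_eq_bot G x D W r d hD hW hrd (Or.inr (by omega))⟩
  · constructor
    · constructor
      · -- d ≤ D
        by_contra hDd
        obtain ⟨u, hu, hune⟩ := (Submodule.ne_bot_iff _).mp hd_hi
        obtain ⟨w, hw, rfl⟩ := hu
        have hz : Estar G x ((r : ℤ) + (d : ℤ)) = 0 :=
          Estar_zero_of_not_mem G x D hD (by omega)
        rw [Matrix.mulVecLin_apply, hz, Matrix.zero_mulVec] at hune
        exact hune rfl
      · show actSp (Qgraded G x D (d : ℤ)) W ≠ ⊥
        rw [part1]
        exact hd_hi
    · intro i hi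
      rw [Set.mem_setOf_eq] at hi
      by_contra hcon
      exact hi.2 (act_eq_bot G x D W r d hD hW hrd (Or.inl (by omega)))
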